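/- For every m ≥ 2 and all indices i_1, …, i_m ∈ {1,…,n}, the element r_{i_1 i_2 ⋯ i_m} also satisfies the left-handed expansion r_{i_1 i_2 ⋯ i_m} = ∑_{j=1}^{m} (−1)^{j+1} x_{i_j} ⊗ r_{i_1 ⋯ î_j ⋯ i_m} in V^{⊗m}. -/

import Mathlib

open scoped TensorProduct
open PiTensorProduct

namespace OrePaper

variable (k : Type*) [Field k] (V : Type*) [AddCommGroup V] [Module k V]

/-- The canonical isomorphism `V^{⊗a} ⊗ V^{⊗b} ≃ V^{⊗(a+b)}`. -/
noncomputable abbrev mulPow (a b : ℕ) :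
    ((⨂[k]^a V) ⊗[k] (⨂[k]^b V)) ≃ₗ[k] ⨂[k]^(a+b) V :=
  TensorPower.mulEquiv

variable {k V}

/-- Identification of `V` with `V^{⊗1}`. -/
noncomputable def toPow1 : V ≃ₗ[k] ⨂[k]^1 V :=
  (PiTensorProduct.subsingletonEquiv (s := fun _ : Fin 1 => V) (0 : Fin 1)).symm

/-- `w ⊗ v ∈ V^{⊗(m+1)}` for `w ∈ V^{⊗m}`, `v ∈ V`. -/
noncomputable def append {m : ℕ} (w : ⨂[k]^m V) (v : V) : ⨂[k]^(m+1) V :=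
  mulPow k V m 1 (w ⊗ₜ[k] toPow1 v)

/-- `v ⊗ w ∈ V^{⊗(m+1)}` for `v ∈ V`, `w ∈ V^{⊗m}`. -/
noncomputable def prepend {m : ℕ} (v : V) (w : ⨂[k]^m V) : ⨂[k]^(m+1) V :=
  TensorPower.cast k V (Nat.add_comm 1 m) (mulPow k V 1 m (toPow1 v ⊗ₜ[k] w))

/-- The elements `r_{i_1 i_2 ⋯ i_m} ∈ V^{⊗m}`:
`r_{i_1 i_2} = x_{i_1} ⊗ x_{i_2} − x_{i_2} ⊗ x_{i_1}` and, recursively for `m ≥ 3`,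
`r_{i_1 ⋯ i_m} = ∑_{j=1}^{m} (−1)^{m−j} r_{i_1 ⋯ î_j ⋯ i_m} ⊗ x_{i_j}`.
(For a single index we set `r_i = x_i`, which is the convention making the left-handed
expansion hold also for `m = 2`.) -/
noncomputable def rElt {n : ℕ} (x : Fin n → V) : (m : ℕ) → (Fin m → Fin n) → ⨂[k]^m V
  | 0, _ => 0
  | 1, ι => toPow1 (x (ι 0))
  | 2, ι => append (toPow1 (x (ι 0))) (x (ι 1)) - append (toPow1 (x (ι 1))) (x (ι 0))
  | (m+3), ι => ∑ j : Fin (m+3),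
      ((-1 : k)^((m+2) - (j : ℕ))) • append (rElt x (m+2) (ι ∘ j.succAbove)) (x (ι j))

/-! ### Auxiliary lemmas -/

lemma toPow1_apply (v : V) : (toPow1 v : ⨂[k]^1 V) = tprod k (fun _ => v) := by
  rw [toPow1, LinearEquiv.symm_apply_eq, subsingletonEquiv_apply_tprod]

lemma mulPow_tprod {a b : ℕ} (f : Fin a → V) (g : Fin b → V) :
    mulPow k V a b (tprod k f ⊗ₜ[k] tprod k g) = tprod k (Fin.append f g) := by
  rw [← TensorPower.gMul_def, TensorPower.tprod_mul_tprod]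

lemma append_tprod {m : ℕ} (f : Fin m → V) (v : V) :
    append (tprod k f) v = PiTensorProduct.tprod k (Fin.snoc f v) := by
  rw [append, toPow1_apply, mulPow_tprod, Fin.append_right_eq_snoc]

lemma prepend_tprod {m : ℕ} (v : V) (f : Fin m → V) :
    prepend v (tprod k f) = PiTensorProduct.tprod k (Fin.cons v f) := by
  rw [prepend, toPow1_apply, mulPow_tprod, TensorPower.cast_tprod,
    Fin.append_left_eq_cons]
  congr 1

/-- `append · v` as a linear map. -/
noncomputable def appendL {m : ℕ} (v : V) : (⨂[k]^m V) →ₗ[k] ⨂[k]^(m+1) V :=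
  (mulPow k V m 1).toLinearMap ∘ₗ ((TensorProduct.mk k _ _).flip (toPow1 v))

lemma appendL_apply {m : ℕ} (v : V) (w : ⨂[k]^m V) : appendL v w = append w v := rfl

/-- `prepend v` as a linear map. -/
noncomputable def prependL {m : ℕ} (v : V) : (⨂[k]^m V) →ₗ[k] ⨂[k]^(m+1) V :=
  (TensorPower.cast k V (Nat.add_comm 1 m)).toLinearMap ∘ₗ (mulPow k V 1 m).toLinearMap ∘ₗ
    (TensorProduct.mk k _ _ (toPow1 v))

lemma prependL_apply {m : ℕ} (v : V) (w : ⨂[k]^m V) : prependL v w = prepend v w := rfl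

lemma append_add {m : ℕ} (w w' : ⨂[k]^m V) (v : V) :
    append (w + w') v = append w v + append w' v := by
  simp only [← appendL_apply, map_add]

lemma append_smul {m : ℕ} (c : k) (w : ⨂[k]^m V) (v : V) :
    append (c • w) v = c • append w v := by
  simp only [← appendL_apply, map_smul]

lemma append_sum {m : ℕ} {α : Type*} (s : Finset α) (f : α → ⨂[k]^m V) (v : V) :
    append (∑ a ∈ s, f a) v = ∑ a ∈ s, append (f a) v := by
  simp only [← appendL_apply, map_sum]

lemma prepend_add {m : ℕ} (v : V) (w w' : ⨂[k]^m V) :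
    prepend v (w + w') = prepend v w + prepend v w' := by
  simp only [← prependL_apply, map_add]

lemma prepend_smul {m : ℕ} (c : k) (v : V) (w : ⨂[k]^m V) :
    prepend v (c • w) = c • prepend v w := by
  simp only [← prependL_apply, map_smul]

lemma prepend_sum {m : ℕ} {α : Type*} (s : Finset α) (v : V) (f : α → ⨂[k]^m V) :
    prepend v (∑ a ∈ s, f a) = ∑ a ∈ s, prepend v (f a) := by
  simp only [← prependL_apply, map_sum]

lemma append_prepend {m : ℕ} (v : V) (w : ⨂[k]^m V) (u : V) :
    append (prepend v w) u = prepend v (append w u) := by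
  induction w using PiTensorProduct.induction_on with
  | smul_tprod c f =>
    rw [prepend_smul, append_smul, append_smul, prepend_smul, prepend_tprod, append_tprod,
      append_tprod, prepend_tprod, Fin.cons_snoc_eq_snoc_cons]
  | add x y hx hy =>
    rw [prepend_add, append_add, append_add, prepend_add, hx, hy]

lemma prepend_toPow1 (v u : V) :
    prepend v (toPow1 u) = append (toPow1 (k := k) v) u := by
  rw [toPow1_apply, toPow1_apply, prepend_tprod, append_tprod]
  congr 1
  funext i
  fin_cases i <;> simp [Fin.snoc]

/-! ### Fin combinatorics -/

lemma val_succAbove {n : ℕ} (p : Fin (n+1)) (i : Fin n) :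
    (p.succAbove i : ℕ) = if (i:ℕ) < (p:ℕ) then (i:ℕ) else (i:ℕ)+1 := by
  rw [Fin.succAbove]
  by_cases h : (i:ℕ) < (p:ℕ)
  · rw [if_pos (by simpa [Fin.lt_def] using h), if_pos h, Fin.coe_castSucc]
  · rw [if_neg (by simpa [Fin.lt_def] using h), if_neg h, Fin.val_succ]

lemma val_predAbove {n : ℕ} (p : Fin n) (i : Fin (n+1)) :
    (p.predAbove i : ℕ) = if (p:ℕ) < (i:ℕ) then (i:ℕ)-1 else (i:ℕ) := by
  rw [Fin.predAbove]
  by_cases h : (p:ℕ) < (i:ℕ)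
  · rw [dif_pos (by simpa [Fin.lt_def] using h), if_pos h, Fin.coe_pred]
  · rw [dif_neg (by simpa [Fin.lt_def] using h), if_neg h, Fin.coe_castPred]

lemma sA_sA_pA {n : ℕ} (j : Fin (n+2)) (l : Fin (n+1)) :
    (j.succAbove l).succAbove (l.predAbove j) = j := by
  have hj := j.isLt; have hl := l.isLt
  apply Fin.ext
  rw [val_succAbove, val_predAbove, val_succAbove]
  split_ifs <;> omega

lemma pA_sA_pA {n : ℕ} (j : Fin (n+2)) (l : Fin (n+1)) :
    (l.predAbove j).predAbove (j.succAbove l) = l := by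
  have hj := j.isLt; have hl := l.isLt
  apply Fin.ext
  rw [val_predAbove, val_succAbove, val_predAbove]
  split_ifs <;> omega

lemma sA_comp {n : ℕ} (j : Fin (n+2)) (l : Fin (n+1)) (t : Fin n) :
    j.succAbove (l.succAbove t) = (j.succAbove l).succAbove ((l.predAbove j).succAbove t) := by
  have hj := j.isLt; have hl := l.isLt; have ht := t.isLt
  apply Fin.ext
  rw [val_succAbove, val_succAbove, val_succAbove, val_succAbove, val_succAbove, val_predAbove]
  split_ifs <;> omega

lemma sign_eq {m : ℕ} (j : Fin (m+3)) (l : Fin (m+2)) :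
    ((m+2) - (j:ℕ)) + (l:ℕ) = ((j.succAbove l : ℕ)) + ((m+1) - ((l.predAbove j : ℕ))) := by
  have hj := j.isLt; have hl := l.isLt
  rw [val_succAbove, val_predAbove]
  split_ifs <;> omega

/-- The involution `(j, l) ↦ (j.succAbove l, l.predAbove j)` on pairs. -/
def swapPair {n : ℕ} : Fin (n+2) × Fin (n+1) → Fin (n+2) × Fin (n+1) :=
  fun p => (p.1.succAbove p.2, p.2.predAbove p.1)

lemma swapPair_invol {n : ℕ} : Function.Involutive (swapPair (n := n)) := by
  intro p
  simp only [swapPair, sA_sA_pA, pA_sA_pA]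

/-- `swapPair` as an equiv. -/
def swapEquiv {n : ℕ} : (Fin (n+2) × Fin (n+1)) ≃ (Fin (n+2) × Fin (n+1)) :=
  Function.Involutive.toPerm _ swapPair_invol

/-! ### Unfolding lemmas for `rElt` -/

lemma rElt_one {n : ℕ} (x : Fin n → V) (ι : Fin 1 → Fin n) :
    rElt (k := k) x 1 ι = toPow1 (x (ι 0)) := rfl

lemma rElt_add_three {n : ℕ} (x : Fin n → V) (m : ℕ) (ι : Fin (m+3) → Fin n) :
    rElt (k := k) x (m+3) ι = ∑ j : Fin (m+3),
      ((-1 : k)^((m+2) - (j : ℕ))) • append (rElt x (m+2) (ι ∘ j.succAbove)) (x (ι j)) := rfl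

lemma rElt_succ_succ {n : ℕ} (x : Fin n → V) (m : ℕ) (ι : Fin (m+2) → Fin n) :
    rElt (k := k) x (m+2) ι = ∑ j : Fin (m+2),
      ((-1 : k)^((m+1) - (j : ℕ))) • append (rElt x (m+1) (ι ∘ j.succAbove)) (x (ι j)) := by
  cases m with
  | succ m => exact rElt_add_three x m ι
  | zero =>
    rw [Fin.sum_univ_two]
    show append (toPow1 (x (ι 0))) (x (ι 1)) - append (toPow1 (x (ι 1))) (x (ι 0)) = _
    rw [rElt_one, rElt_one]
    have h0 : ((0 : Fin 2).succAbove 0) = 1 := rfl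
    have h1 : ((1 : Fin 2).succAbove 0) = 0 := rfl
    simp only [Function.comp_apply, h0, h1]
    norm_num
    abel

/-- **Lemma 4.2(a)**: the left-handed expansion
`r_{i_1 ⋯ i_m} = ∑_{j=1}^{m} (−1)^{j+1} x_{i_j} ⊗ r_{i_1 ⋯ î_j ⋯ i_m}` for all `m ≥ 2`. -/
theorem lemma_4_2_a {n : ℕ} (hn : 2 ≤ n) (b : Module.Basis (Fin n) k V)
    (m : ℕ) (ι : Fin (m+2) → Fin n) :
    rElt (k := k) (fun i => b i) (m+2) ι
      = ∑ j : Fin (m+2),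
          ((-1 : k)^((j : ℕ))) •
            (prepend (b (ι j)) (rElt (k := k) (fun i => b i) (m+1) (ι ∘ j.succAbove))
              : ⨂[k]^(m+2) V) := by
  induction m with
  | zero =>
    rw [Fin.sum_univ_two]
    show append (toPow1 (b (ι 0))) (b (ι 1)) - append (toPow1 (b (ι 1))) (b (ι 0)) = _
    rw [rElt_one, rElt_one]
    have h0 : ((0 : Fin 2).succAbove 0) = 1 := rfl
    have h1 : ((1 : Fin 2).succAbove 0) = 0 := rfl
    simp only [Function.comp_apply, h0, h1, prepend_toPow1]
    norm_num
    abel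
  | succ m IH =>
    rw [rElt_add_three]
    have lhs_eq :
        (∑ j : Fin (m+3), ((-1 : k)^((m+2) - (j : ℕ))) •
            append (rElt (fun i => b i) (m+2) (ι ∘ j.succAbove)) (b (ι j)))
        = ∑ z : Fin (m+3) × Fin (m+2),
            ((-1 : k)^(((m+2) - (z.1 : ℕ)) + (z.2 : ℕ))) •
              prepend (b (ι (z.1.succAbove z.2)))
                (append (rElt (k := k) (fun i => b i) (m+1)
                    (ι ∘ z.1.succAbove ∘ z.2.succAbove)) (b (ι z.1))) := by
      rw [Fintype.sum_prod_type]
      refine Finset.sum_congr rfl fun j _ => ?_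
      rw [IH (ι ∘ j.succAbove), append_sum, Finset.smul_sum]
      refine Finset.sum_congr rfl fun l _ => ?_
      rw [append_smul, smul_smul, ← pow_add, append_prepend]
      rfl
    have rhs_eq :
        (∑ p : Fin (m+3), ((-1 : k)^((p : ℕ))) •
            prepend (b (ι p)) (rElt (k := k) (fun i => b i) (m+2) (ι ∘ p.succAbove)))
        = ∑ z : Fin (m+3) × Fin (m+2),
            ((-1 : k)^((z.1 : ℕ) + ((m+1) - (z.2 : ℕ)))) •
              prepend (b (ι z.1))
                (append (rElt (k := k) (fun i => b i) (m+1)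
                    (ι ∘ z.1.succAbove ∘ z.2.succAbove)) (b (ι (z.1.succAbove z.2)))) := by
      rw [Fintype.sum_prod_type]
      refine Finset.sum_congr rfl fun p _ => ?_
      rw [rElt_succ_succ, prepend_sum, Finset.smul_sum]
      refine Finset.sum_congr rfl fun q _ => ?_
      rw [prepend_smul, smul_smul, ← pow_add]
      rfl
    rw [lhs_eq, rhs_eq]
    refine Fintype.sum_equiv swapEquiv _ _ fun z => ?_
    obtain ⟨j, l⟩ := z
    have he : swapEquiv (j, l) = (j.succAbove l, l.predAbove j) := rfl
    rw [he]
    have hfun : ι ∘ (j.succAbove l).succAbove ∘ (l.predAbove j).succAbove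
        = ι ∘ j.succAbove ∘ l.succAbove := by
      funext t
      simp only [Function.comp_apply]
      rw [← sA_comp]
    simp only [hfun, sA_sA_pA, sign_eq]

end OrePaper
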